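/- The left U-module U/U·m_χ is a Whittaker module: for every u ∈ U there exists n ∈ ℕ such that (ξ_1 − χ(ξ_1))·(ξ_2 − χ(ξ_2))⋯(ξ_n − χ(ξ_n))·u ∈ U·m_χ for all ξ_1,…,ξ_n ∈ m. -/

import Mathlib

section Aux

attribute [local instance 100] LieRing.ofAssociativeRing

variable {K : Type*} [Field K] {g : Type*} [LieRing g] [LieAlgebra K g]

/-- Iterated bracket in `g`: `gIt [a₁,…,aₙ] x = ⁅a₁, ⁅a₂, …, ⁅aₙ, x⁆⁆⁆`. -/
def gIt (L : List g) (x : g) : g := L.foldr (fun a y => ⁅a, y⁆) x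

@[simp] lemma gIt_nil (x : g) : gIt ([] : List g) x = x := rfl

@[simp] lemma gIt_cons (a : g) (L : List g) (x : g) :
    gIt (a :: L) x = ⁅a, gIt L x⁆ := rfl

lemma gIt_zero (L : List g) : gIt L (0 : g) = 0 := by
  induction L with
  | nil => rfl
  | cons a L ih => simp [ih]

lemma gIt_add (L : List g) (x y : g) : gIt L (x + y) = gIt L x + gIt L y := by
  induction L with
  | nil => rfl
  | cons a L ih => simp [ih]

lemma gIt_smul (L : List g) (c : K) (x : g) : gIt L (c • x) = c • gIt L x := by
  induction L with
  | nil => rfl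
  | cons a L ih => simp [ih]

variable (K) in
/-- Iterated bracket in the universal enveloping algebra. -/
noncomputable def adIt (L : List g) (u : UniversalEnvelopingAlgebra K g) :
    UniversalEnvelopingAlgebra K g :=
  L.foldr (fun x v => ⁅UniversalEnvelopingAlgebra.ι K x, v⁆) u

@[simp] lemma adIt_nil (u : UniversalEnvelopingAlgebra K g) : adIt K ([] : List g) u = u := rfl

@[simp] lemma adIt_cons (a : g) (L : List g) (u : UniversalEnvelopingAlgebra K g) :
    adIt K (a :: L) u = ⁅UniversalEnvelopingAlgebra.ι K a, adIt K L u⁆ := rfl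

lemma adIt_append (L L' : List g) (u : UniversalEnvelopingAlgebra K g) :
    adIt K (L ++ L') u = adIt K L (adIt K L' u) := by
  simp [adIt, List.foldr_append]

lemma adIt_zero (L : List g) : adIt K L (0 : UniversalEnvelopingAlgebra K g) = 0 := by
  induction L with
  | nil => rfl
  | cons a L ih => simp [ih]

lemma adIt_add (L : List g) (u v : UniversalEnvelopingAlgebra K g) :
    adIt K L (u + v) = adIt K L u + adIt K L v := by
  induction L with
  | nil => rfl
  | cons a L ih => simp [ih]

lemma adIt_ι (L : List g) (x : g) :
    adIt K L (UniversalEnvelopingAlgebra.ι K x) = UniversalEnvelopingAlgebra.ι K (gIt L x) := by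
  induction L with
  | nil => rfl
  | cons a L ih =>
    rw [adIt_cons, ih, gIt_cons, LieHom.map_lie]

lemma adIt_algebraMap (L : List g) (r : K) (hL : L ≠ []) :
    adIt K L (algebraMap K (UniversalEnvelopingAlgebra K g) r) = 0 := by
  match L with
  | a :: L' =>
    rcases eq_or_ne L' [] with rfl | hne
    · simp [Ring.lie_def, Algebra.commutes]
    · simp [adIt_cons, adIt_algebraMap L' r hne]

end Aux

section Aux2

attribute [local instance 100] LieRing.ofAssociativeRing

variable {K : Type*} [Field K] {g : Type*} [LieRing g] [LieAlgebra K g]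

lemma lie_mul' (a v w : UniversalEnvelopingAlgebra K g) :
    ⁅a, v * w⁆ = ⁅a, v⁆ * w + v * ⁅a, w⁆ := by
  simp only [Ring.lie_def]; noncomm_ring

lemma adIt_mul {m : Submodule K g} :
    ∀ (L : List g) (nv nw : ℕ) (v w : UniversalEnvelopingAlgebra K g),
      (∀ L' : List g, (∀ a ∈ L', a ∈ m) → nv ≤ L'.length → adIt K L' v = 0) →
      (∀ L' : List g, (∀ a ∈ L', a ∈ m) → nw ≤ L'.length → adIt K L' w = 0) →
      (∀ a ∈ L, a ∈ m) → nv + nw ≤ L.length + 1 → adIt K L (v * w) = 0 := by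
  intro L
  induction L using List.reverseRecOn with
  | nil =>
    intro nv nw v w hv hw _ hlen
    simp only [List.length_nil] at hlen
    rcases Nat.eq_zero_or_pos nv with h0 | h0
    · subst h0
      have : v = 0 := by simpa using hv [] (by simp) (by simp)
      simp [this, adIt_zero]
    · have : nw = 0 := by omega
      subst this
      have : w = 0 := by simpa using hw [] (by simp) (by simp)
      simp [this, adIt_zero]
  | append_singleton L a IH =>
    intro nv nw v w hv hw hmem hlen
    have ha : a ∈ m := hmem a (by simp)
    have hmemL : ∀ b ∈ L, b ∈ m := fun b hb => hmem b (by simp [hb])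
    rcases Nat.eq_zero_or_pos nv with h0 | h0
    · have : v = 0 := by simpa using hv [] (by simp) (by simp [h0])
      simp [this, adIt_zero]
    rcases Nat.eq_zero_or_pos nw with h1 | h1
    · have : w = 0 := by simpa using hw [] (by simp) (by simp [h1])
      simp [this, adIt_zero]
    obtain ⟨nv', rfl⟩ : ∃ nv', nv = nv' + 1 := ⟨nv - 1, by omega⟩
    obtain ⟨nw', rfl⟩ : ∃ nw', nw = nw' + 1 := ⟨nw - 1, by omega⟩
    rw [adIt_append]
    have step : adIt K [a] (v * w)
        = ⁅UniversalEnvelopingAlgebra.ι K a, v⁆ * w + v * ⁅UniversalEnvelopingAlgebra.ι K a, w⁆ := by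
      simp [lie_mul']
    rw [step, adIt_add]
    simp only [List.length_append, List.length_singleton] at hlen
    have hv' : ∀ L' : List g, (∀ b ∈ L', b ∈ m) → nv' ≤ L'.length →
        adIt K L' ⁅UniversalEnvelopingAlgebra.ι K a, v⁆ = 0 := by
      intro L' hm' hl'
      have := hv (L' ++ [a]) (by
        intro b hb
        rcases List.mem_append.mp hb with hb | hb
        · exact hm' b hb
        · simpa using (List.mem_singleton.mp hb) ▸ ha) (by simp; omega)
      rwa [adIt_append] at this
    have hw' : ∀ L' : List g, (∀ b ∈ L', b ∈ m) → nw' ≤ L'.length →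
        adIt K L' ⁅UniversalEnvelopingAlgebra.ι K a, w⁆ = 0 := by
      intro L' hm' hl'
      have := hw (L' ++ [a]) (by
        intro b hb
        rcases List.mem_append.mp hb with hb | hb
        · exact hm' b hb
        · simpa using (List.mem_singleton.mp hb) ▸ ha) (by simp; omega)
      rwa [adIt_append] at this
    rw [IH nv' (nw' + 1) _ w hv' hw hmemL (by omega),
      IH (nv' + 1) nw' v _ hv hw' hmemL (by omega), add_zero]

end Aux2

section Aux3

attribute [local instance 100] LieRing.ofAssociativeRing

open Module

variable {K : Type*} [Field K] [IsAlgClosed K] [CharZero K]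
  {g : Type*} [LieRing g] [LieAlgebra K g] [FiniteDimensional K g]

lemma shift_lemma (h : g) {c μ : K} {ξ x : g}
    (hξ : ξ ∈ (LieAlgebra.ad K g h).eigenspace c)
    (hx : x ∈ (LieAlgebra.ad K g h).maxGenEigenspace μ) :
    ⁅ξ, x⁆ ∈ (LieAlgebra.ad K g h).maxGenEigenspace (c + μ) := by
  set A := LieAlgebra.ad K g h with hA
  have hξ' : ⁅h, ξ⁆ = c • ξ := by
    have := Module.End.mem_eigenspace_iff.mp hξ
    rwa [hA, LieAlgebra.ad_apply] at this
  have key : ∀ y : g, (A - (c + μ) • 1) ⁅ξ, y⁆ = ⁅ξ, (A - μ • 1) y⁆ := by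
    intro y
    have hAy : A ⁅ξ, y⁆ = ⁅⁅h, ξ⁆, y⁆ + ⁅ξ, A y⁆ := by
      simp only [hA, LieAlgebra.ad_apply]
      exact leibniz_lie h ξ y
    simp only [LinearMap.sub_apply, LinearMap.smul_apply, Module.End.one_apply, hAy, hξ',
      smul_lie, lie_sub, lie_smul]
    rw [add_smul]
    abel
  have keyk : ∀ (k : ℕ) (y : g),
      ((A - (c + μ) • 1) ^ k) ⁅ξ, y⁆ = ⁅ξ, ((A - μ • 1) ^ k) y⁆ := by
    intro k
    induction k with
    | zero => intro y; simp
    | succ k ih =>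
      intro y
      rw [pow_succ', Module.End.mul_apply, ih y, key (((A - μ • 1) ^ k) y),
        ← Module.End.mul_apply, ← pow_succ']
  obtain ⟨k, hk⟩ := Module.End.mem_maxGenEigenspace A μ x |>.mp hx
  exact (Module.End.mem_maxGenEigenspace A (c + μ) ⁅ξ, x⁆).mpr ⟨k, by rw [keyk k x, hk, lie_zero]⟩

lemma star_lemma (h : g) (m : Submodule K g)
    (hm' : m ≤ ⨆ (i : ℤ) (_ : i ≤ (-1 : ℤ)), (LieAlgebra.ad K g h).eigenspace (i : K)) :
    ∀ x : g, ∃ n : ℕ, ∀ L : List g, (∀ a ∈ L, a ∈ m) → n ≤ L.length → gIt L x = 0 := by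
  set A := LieAlgebra.ad K g h with hA
  have KL : ∀ (L : List g), (∀ a ∈ L, a ∈ m) → ∀ (μ : K) (x : g), x ∈ A.maxGenEigenspace μ →
      gIt L x ∈ ⨆ (c : ℤ) (_ : c ≤ -(L.length : ℤ)), A.maxGenEigenspace (μ + c) := by
    intro L
    induction L with
    | nil =>
      intro _ μ x hx
      refine Submodule.mem_iSup_of_mem (0 : ℤ) (Submodule.mem_iSup_of_mem (by simp) ?_)
      simpa using hx
    | cons a L IH =>
      intro hmem μ x hx
      have ha := hm' (hmem a (by simp))
      have hy := IH (fun b hb => hmem b (by simp [hb])) μ x hx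
      set T := ⨆ (c : ℤ) (_ : c ≤ -(((a :: L).length : ℕ) : ℤ)), A.maxGenEigenspace (μ + c)
        with hT
      show gIt (a :: L) x ∈ T
      rw [gIt_cons]
      let F : g →ₗ[K] g :=
        { toFun := fun b => ⁅b, gIt L x⁆
          map_add' := fun b c => add_lie b c _
          map_smul' := fun t b => smul_lie t b _ }
      have hFle : (⨆ (i : ℤ) (_ : i ≤ (-1 : ℤ)), A.eigenspace (i : K)) ≤ T.comap F := by
        refine iSup₂_le fun i hi => ?_
        intro ξ hξ
        simp only [Submodule.mem_comap]
        have hinner : (⨆ (c : ℤ) (_ : c ≤ -(L.length : ℤ)), A.maxGenEigenspace (μ + c)) ≤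
            T.comap (LieAlgebra.ad K g ξ) := by
          refine iSup₂_le fun c hc => ?_
          intro z hz
          simp only [Submodule.mem_comap, LieAlgebra.ad_apply]
          have hsh := shift_lemma h hξ hz
          have hcast : ((i : K)) + (μ + (c : K)) = μ + (((i + c : ℤ) : K)) := by
            push_cast; ring
          rw [hcast] at hsh
          refine Submodule.mem_iSup_of_mem (i + c) (Submodule.mem_iSup_of_mem ?_ hsh)
          simp only [List.length_cons]
          push_cast
          omega
        exact hinner hy
      exact hFle ha
  let good : ℕ → Submodule K g := fun n =>
    { carrier := {x | ∀ L : List g, (∀ a ∈ L, a ∈ m) → n ≤ L.length → gIt L x = 0}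
      add_mem' := by
        intro x y hx hy
        intro L hmL hlL
        rw [gIt_add, hx L hmL hlL, hy L hmL hlL, add_zero]
      zero_mem' := fun L _ _ => gIt_zero L
      smul_mem' := by
        intro t x hx L hmL hlL
        rw [gIt_smul, hx L hmL hlL, smul_zero] }
  have hgoodmono : ∀ {n n' : ℕ}, n ≤ n' → good n ≤ good n' := by
    intro n n' hnn x hx L hmL hlL
    exact hx L hmL (le_trans hnn hlL)
  intro x
  have hx : x ∈ ⨆ n, good n := by
    have htop := Module.End.iSup_maxGenEigenspace_eq_top A
    have hle : ∀ μ : K, A.maxGenEigenspace μ ≤ ⨆ n, good n := by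
      intro μ
      obtain ⟨n, hn⟩ : ∃ n : ℕ, ∀ c : ℤ, c ≤ -(n : ℤ) → A.maxGenEigenspace (μ + c) = ⊥ := by
        have h1 : {ν : K | A.maxGenEigenspace ν ≠ ⊥}.Finite := by
          apply A.finite_hasEigenvalue.subset
          intro ν hν
          have hν' : A.HasUnifEigenvalue ν ⊤ := hν
          exact (Module.End.hasUnifEigenvalue_iff_hasUnifEigenvalue_one
            (by exact_mod_cast WithTop.top_pos)).mp hν'
        have hinj : Function.Injective (fun c : ℤ => μ + (c : K)) := by
          intro a b hab
          simp only [add_right_inj] at hab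
          exact_mod_cast hab
        have hfin : {c : ℤ | A.maxGenEigenspace (μ + (c : K)) ≠ ⊥}.Finite := by
          have : {c : ℤ | A.maxGenEigenspace (μ + (c : K)) ≠ ⊥} =
              (fun c : ℤ => μ + (c : K)) ⁻¹' {ν : K | A.maxGenEigenspace ν ≠ ⊥} := rfl
          rw [this]
          exact h1.preimage hinj.injOn
        obtain ⟨b, hb⟩ := hfin.bddBelow
        refine ⟨(-b).toNat + 1, fun c hc => ?_⟩
        by_contra hne
        have h2 : b ≤ c := hb hne
        have h3 : -b ≤ ((-b).toNat : ℤ) := Int.self_le_toNat _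
        omega
      intro x hx
      refine Submodule.mem_iSup_of_mem n ?_
      intro L hmL hlL
      have hmem := KL L hmL μ x hx
      have hbot : (⨆ (c : ℤ) (_ : c ≤ -(L.length : ℤ)), A.maxGenEigenspace (μ + c)) = ⊥ := by
        refine le_bot_iff.mp (iSup₂_le fun c hc => ?_)
        rw [hn c (by omega)]
      rw [hbot] at hmem
      simpa using hmem
    exact (iSup_le hle) (htop ▸ Submodule.mem_top)
  have hdir : Directed (· ≤ ·) good := fun n n' =>
    ⟨max n n', hgoodmono (le_max_left _ _), hgoodmono (le_max_right _ _)⟩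
  obtain ⟨n, hn⟩ := (Submodule.mem_iSup_of_directed good hdir).mp hx
  exact ⟨n, hn⟩

end Aux3

section Aux4

attribute [local instance 100] LieRing.ofAssociativeRing

variable {K : Type*} [Field K] {g : Type*} [LieRing g] [LieAlgebra K g]

set_option synthInstance.maxHeartbeats 1000000 in
set_option maxHeartbeats 1000000 in
lemma UEA_mem_adjoin (u : UniversalEnvelopingAlgebra K g) :
    u ∈ Algebra.adjoin K (Set.range (UniversalEnvelopingAlgebra.ι K : g →ₗ⁅K⁆ _)) := by
  set S : Subalgebra K (UniversalEnvelopingAlgebra K g) :=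
    Algebra.adjoin K (Set.range (UniversalEnvelopingAlgebra.ι K : g →ₗ⁅K⁆ _)) with hS
  let f : g →ₗ⁅K⁆ S :=
    { toFun := fun x => ⟨UniversalEnvelopingAlgebra.ι K x, Algebra.subset_adjoin ⟨x, rfl⟩⟩
      map_add' := fun x y => Subtype.ext (by simp)
      map_smul' := fun t x => Subtype.ext (by simp)
      map_lie' := fun {x y} => Subtype.ext (by
        show (UniversalEnvelopingAlgebra.ι K) ⁅x, y⁆ = _
        rw [LieHom.map_lie]
        simp only [Ring.lie_def]
        rfl) }
  have key : S.val.comp (UniversalEnvelopingAlgebra.lift K f) =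
      AlgHom.id K (UniversalEnvelopingAlgebra K g) := by
    apply UniversalEnvelopingAlgebra.hom_ext
    apply LieHom.ext
    intro x
    simp [UniversalEnvelopingAlgebra.lift_ι_apply, f]
  have : S.val ((UniversalEnvelopingAlgebra.lift K f) u) = u := by
    have := DFunLike.congr_fun key u
    simpa using this
  rw [← this]
  exact ((UniversalEnvelopingAlgebra.lift K f) u).2

end Aux4

set_option maxHeartbeats 2000000 in
set_option synthInstance.maxHeartbeats 1000000 in
/-- The left `U`-module `U/U·m_χ` is a Whittaker module: for every `u ∈ U`
there exists `n ∈ ℕ` such that `(ξ₁ − χ(ξ₁))·(ξ₂ − χ(ξ₂))⋯(ξₙ − χ(ξₙ))·u ∈ U·m_χ` for all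
`ξ₁, …, ξₙ ∈ m`. -/
theorem quotient_is_whittaker
    (K : Type*) [Field K] [IsAlgClosed K] [CharZero K]
    (g : Type*) [LieRing g] [LieAlgebra K g] [FiniteDimensional K g]
    [LieAlgebra.IsSemisimple K g]
    (e h f : g) (he : e ≠ 0)
    (hhe : ⁅h, e⁆ = (2 : K) • e) (hhf : ⁅h, f⁆ = (-2 : K) • f) (hef : ⁅e, f⁆ = h)
    (l : Submodule K g)
    (hl : l ≤ Module.End.eigenspace (LieAlgebra.ad K g h) ((-1 : ℤ) : K))
    (hiso : ∀ x ∈ l, ∀ y ∈ l, killingForm K g e ⁅x, y⁆ = 0)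
    (hmax : ∀ l' : Submodule K g,
      l' ≤ Module.End.eigenspace (LieAlgebra.ad K g h) ((-1 : ℤ) : K) →
      (∀ x ∈ l', ∀ y ∈ l', killingForm K g e ⁅x, y⁆ = 0) → l ≤ l' → l' = l)
    (m : Submodule K g)
    (hm : m = l ⊔ ⨆ i : ℤ, ⨆ _ : i ≤ -2,
      Module.End.eigenspace (LieAlgebra.ad K g h) (i : K))
    (I : Submodule (UniversalEnvelopingAlgebra K g) (UniversalEnvelopingAlgebra K g))
    (hI : I = Submodule.span (UniversalEnvelopingAlgebra K g)
      {u : UniversalEnvelopingAlgebra K g | ∃ ξ ∈ m,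
        u = UniversalEnvelopingAlgebra.ι K ξ -
          algebraMap K (UniversalEnvelopingAlgebra K g) (killingForm K g e ξ)}) :
    ∀ u : UniversalEnvelopingAlgebra K g, ∃ n : ℕ,
      ∀ ξ : Fin n → g, (∀ i, ξ i ∈ m) →
        (List.ofFn fun i : Fin n =>
            UniversalEnvelopingAlgebra.ι K (ξ i) -
              algebraMap K (UniversalEnvelopingAlgebra K g)
                (killingForm K g e (ξ i))).prod * u ∈ I := by
  have hm' : m ≤ ⨆ (i : ℤ) (_ : i ≤ (-1 : ℤ)), (LieAlgebra.ad K g h).eigenspace (i : K) := by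
    rw [hm]
    apply sup_le
    · intro x hx
      exact Submodule.mem_iSup_of_mem (-1 : ℤ) (Submodule.mem_iSup_of_mem le_rfl (hl hx))
    · refine iSup₂_le fun i hi => ?_
      intro x hx
      exact Submodule.mem_iSup_of_mem i (Submodule.mem_iSup_of_mem (by omega : i ≤ (-1 : ℤ)) hx)
  have star := star_lemma h m hm'
  have nice : ∀ u : UniversalEnvelopingAlgebra K g, ∃ n : ℕ,
      ∀ L : List g, (∀ a ∈ L, a ∈ m) → n ≤ L.length → adIt K L u = 0 := by
    intro u
    have hu := UEA_mem_adjoin u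
    induction hu using Algebra.adjoin_induction with
    | mem x hx =>
      obtain ⟨x, rfl⟩ := hx
      obtain ⟨n, hn⟩ := star x
      exact ⟨n, fun L hmL hlL => by rw [adIt_ι, hn L hmL hlL, map_zero]⟩
    | algebraMap r =>
      refine ⟨1, fun L hmL hlL => adIt_algebraMap L r ?_⟩
      intro hnil
      rw [hnil] at hlL
      simp at hlL
    | add x y hx hy ihx ihy =>
      obtain ⟨n₁, h1⟩ := ihx
      obtain ⟨n₂, h2⟩ := ihy
      refine ⟨max n₁ n₂, fun L hmL hlL => ?_⟩
      rw [adIt_add, h1 L hmL (le_trans (le_max_left _ _) hlL),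
        h2 L hmL (le_trans (le_max_right _ _) hlL), add_zero]
    | mul x y hx hy ihx ihy =>
      obtain ⟨n₁, h1⟩ := ihx
      obtain ⟨n₂, h2⟩ := ihy
      exact ⟨n₁ + n₂, fun L hmL hlL => adIt_mul L n₁ n₂ x y h1 h2 hmL (by omega)⟩
  have key : ∀ L : List g, (∀ a ∈ L, a ∈ m) → ∀ u : UniversalEnvelopingAlgebra K g,
      (L.map (fun x => UniversalEnvelopingAlgebra.ι K x -
        algebraMap K (UniversalEnvelopingAlgebra K g) (killingForm K g e x))).prod * u
        - adIt K L u ∈ I := by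
    intro L
    induction L with
    | nil =>
      intro _ u
      simp only [List.map_nil, List.prod_nil, one_mul, adIt_nil, sub_self]
      exact I.zero_mem
    | cons a L IH =>
      intro hmem u
      have hD := IH (fun b hb => hmem b (by simp [hb])) u
      have hgen : UniversalEnvelopingAlgebra.ι K a -
          algebraMap K (UniversalEnvelopingAlgebra K g) (killingForm K g e a) ∈ I := by
        rw [hI]
        exact Submodule.subset_span ⟨a, hmem a (by simp), rfl⟩
      obtain ⟨P, hP⟩ : ∃ P : UniversalEnvelopingAlgebra K g,
          UniversalEnvelopingAlgebra.ι K a -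
            algebraMap K (UniversalEnvelopingAlgebra K g) (killingForm K g e a) = P := ⟨_, rfl⟩
      obtain ⟨p, hp⟩ : ∃ p : UniversalEnvelopingAlgebra K g,
          (L.map (fun x => UniversalEnvelopingAlgebra.ι K x -
            algebraMap K (UniversalEnvelopingAlgebra K g) (killingForm K g e x))).prod = p :=
        ⟨_, rfl⟩
      rw [hP] at hgen
      rw [hp] at hD
      have hb : ⁅UniversalEnvelopingAlgebra.ι K a, adIt K L u⁆
          = P * adIt K L u - adIt K L u * P := by
        rw [← hP]
        simp only [Ring.lie_def, sub_mul, mul_sub]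
        rw [Algebra.commutes]
        abel
      have eq1 : ((a :: L).map (fun x => UniversalEnvelopingAlgebra.ι K x -
          algebraMap K (UniversalEnvelopingAlgebra K g) (killingForm K g e x))).prod * u
          - adIt K (a :: L) u
          = P * (p * u - adIt K L u) + adIt K L u * P := by
        simp only [List.map_cons, List.prod_cons]
        rw [adIt_cons, hb, hP, hp]
        noncomm_ring
      rw [eq1]
      exact add_mem (I.smul_mem P hD) (I.smul_mem (adIt K L u) hgen)
  intro u
  obtain ⟨n, hn⟩ := nice u
  refine ⟨n, fun ξ hξ => ?_⟩
  have hmL : ∀ a ∈ List.ofFn ξ, a ∈ m := by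
    intro a ha
    obtain ⟨i, rfl⟩ := List.mem_ofFn.mp ha
    exact hξ i
  have h1 := key (List.ofFn ξ) hmL u
  have h2 : adIt K (List.ofFn ξ) u = 0 := hn _ hmL (by simp)
  have h3 : (List.ofFn ξ).map (fun x => UniversalEnvelopingAlgebra.ι K x -
      algebraMap K (UniversalEnvelopingAlgebra K g) (killingForm K g e x))
      = List.ofFn (fun i : Fin n => UniversalEnvelopingAlgebra.ι K (ξ i) -
        algebraMap K (UniversalEnvelopingAlgebra K g) (killingForm K g e (ξ i))) := by
    rw [List.map_ofFn]
    rfl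
  rw [h3, h2, sub_zero] at h1
  exact h1
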